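/- Consider the cooperative game on N = {g, u_1, ..., u_n} with value ν(S) = 0 if g ∉ S and ν(S) = ρ(∑_{i : u_i ∈ S} w_i)² if g ∈ S, where w_i > 0 are fixed weights and ρ > 0. Let f_i = w_i / ∑_j w_j. Then the Shapley value of crowd member u_i equals φ_{u_i}(ν) = ρ·(w_i²/2 + (2/3)·∑_{j ≠ i} w_i w_j), i.e. φ_{u_i}(ν)/ν(N) = f_i²/2 + (2/3)f_i(1 - f_i) = (2/3)f_i - f_i²/6. -/

import Mathlib

open Finset Filter Topology

/-- The Shapley value of player `i` in the cooperative game with player set `N`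
and value function `ν`. -/
noncomputable def shapley {α : Type*} [DecidableEq α] (N : Finset α) (ν : Finset α → ℝ)
    (i : α) : ℝ :=
  ∑ S ∈ (N.erase i).powerset,
    (((S.card.factorial : ℝ) * ((N.card - S.card - 1).factorial : ℝ)) / (N.card.factorial : ℝ)) *
      (ν (insert i S) - ν S)


/-- auxiliary: the Shapley coefficient -/
noncomputable def coef (n k : ℕ) : ℝ :=
  ((k.factorial : ℝ) * ((n - k).factorial : ℝ)) / ((n + 1).factorial : ℝ)

lemma aux_sum2 (m : ℕ) : ∑ k ∈ Finset.range (m+1), 2*(k+1) = (m+1)*(m+2) := by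
  induction m with
  | zero => simp
  | succ m ih => rw [Finset.sum_range_succ, ih]; ring

lemma aux_sum3 (m : ℕ) :
    ∑ k ∈ Finset.range (m+1), 3*((k+1)*(k+2)) = (m+1)*((m+2)*(m+3)) := by
  induction m with
  | zero => simp
  | succ m ih => rw [Finset.sum_range_succ, ih]; ring

lemma aux_nat1 (m : ℕ) :
    (∑ k ∈ Finset.range (m+1), m.choose k * ((k+1).factorial * (m-k).factorial)) * 2
      = (m+2).factorial := by
  have h : ∀ k ∈ Finset.range (m+1),
      m.choose k * ((k+1).factorial * (m-k).factorial) = (k+1) * m.factorial := by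
    intro k hk
    have hk' : k ≤ m := Nat.lt_succ_iff.mp (Finset.mem_range.mp hk)
    have hc := Nat.choose_mul_factorial_mul_factorial hk'
    calc m.choose k * ((k+1).factorial * (m-k).factorial)
        = (k+1) * (m.choose k * k.factorial * (m-k).factorial) := by
          rw [Nat.factorial_succ]; ring
      _ = (k+1) * m.factorial := by rw [hc]
  rw [Finset.sum_congr rfl h, ← Finset.sum_mul]
  have : (∑ k ∈ Finset.range (m+1), (k+1)) * 2 = (m+1)*(m+2) := by
    rw [← aux_sum2 m, Finset.sum_mul]
    exact Finset.sum_congr rfl fun k _ => by ring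
  calc (∑ k ∈ Finset.range (m+1), (k+1)) * m.factorial * 2
      = ((∑ k ∈ Finset.range (m+1), (k+1)) * 2) * m.factorial := by ring
    _ = (m+1)*(m+2) * m.factorial := by rw [this]
    _ = (m+2).factorial := by
        rw [Nat.factorial_succ, Nat.factorial_succ]; ring

lemma aux_nat2 (m : ℕ) :
    (∑ k ∈ Finset.range (m+1), m.choose k * ((k+2).factorial * (m-k).factorial)) * 3
      = (m+3).factorial := by
  have h : ∀ k ∈ Finset.range (m+1),
      m.choose k * ((k+2).factorial * (m-k).factorial) = (k+1)*(k+2) * m.factorial := by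
    intro k hk
    have hk' : k ≤ m := Nat.lt_succ_iff.mp (Finset.mem_range.mp hk)
    have hc := Nat.choose_mul_factorial_mul_factorial hk'
    calc m.choose k * ((k+2).factorial * (m-k).factorial)
        = (k+1)*(k+2) * (m.choose k * k.factorial * (m-k).factorial) := by
          rw [Nat.factorial_succ, Nat.factorial_succ]; ring
      _ = (k+1)*(k+2) * m.factorial := by rw [hc]
  rw [Finset.sum_congr rfl h, ← Finset.sum_mul]
  have : (∑ k ∈ Finset.range (m+1), (k+1)*(k+2)) * 3 = (m+1)*((m+2)*(m+3)) := by
    rw [← aux_sum3 m, Finset.sum_mul]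
    exact Finset.sum_congr rfl fun k _ => by ring
  calc (∑ k ∈ Finset.range (m+1), (k+1)*(k+2)) * m.factorial * 3
      = ((∑ k ∈ Finset.range (m+1), (k+1)*(k+2)) * 3) * m.factorial := by ring
    _ = (m+1)*((m+2)*(m+3)) * m.factorial := by rw [this]
    _ = (m+3).factorial := by
        rw [Nat.factorial_succ, Nat.factorial_succ, Nat.factorial_succ]; ring

lemma coef_half (m : ℕ) :
    ∑ k ∈ Finset.range (m+1), (m.choose k : ℝ) * coef (m+1) (k+1) = 1/2 := by
  have hf : ((m+2).factorial : ℝ) ≠ 0 := Nat.cast_ne_zero.2 (Nat.factorial_ne_zero _)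
  have h := aux_nat1 m
  have h2 : ((∑ k ∈ Finset.range (m+1),
      m.choose k * ((k+1).factorial * (m-k).factorial) : ℕ) : ℝ) * 2
      = ((m+2).factorial : ℝ) := by exact_mod_cast congrArg (Nat.cast (R := ℝ)) h
  push_cast at h2
  have : ∀ k ∈ Finset.range (m+1), (m.choose k : ℝ) * coef (m+1) (k+1)
      = (m.choose k : ℝ) * (((k+1).factorial : ℝ) * ((m-k).factorial : ℝ)) / ((m+2).factorial : ℝ) := by
    intro k hk
    have : m + 1 - (k+1) = m - k := by omega
    rw [coef, this]
    push_cast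
    ring
  rw [Finset.sum_congr rfl this, ← Finset.sum_div]
  rw [show (∑ k ∈ Finset.range (m+1), (m.choose k : ℝ) * (((k+1).factorial : ℝ) * ((m-k).factorial : ℝ))) = ((m+2).factorial : ℝ) / 2 by linarith]
  field_simp

lemma coef_third (m : ℕ) :
    ∑ k ∈ Finset.range (m+1), (m.choose k : ℝ) * coef (m+2) (k+2) = 1/3 := by
  have hf : ((m+3).factorial : ℝ) ≠ 0 := Nat.cast_ne_zero.2 (Nat.factorial_ne_zero _)
  have h := aux_nat2 m
  have h2 : ((∑ k ∈ Finset.range (m+1),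
      m.choose k * ((k+2).factorial * (m-k).factorial) : ℕ) : ℝ) * 3
      = ((m+3).factorial : ℝ) := by exact_mod_cast congrArg (Nat.cast (R := ℝ)) h
  push_cast at h2
  have : ∀ k ∈ Finset.range (m+1), (m.choose k : ℝ) * coef (m+2) (k+2)
      = (m.choose k : ℝ) * (((k+2).factorial : ℝ) * ((m-k).factorial : ℝ)) / ((m+3).factorial : ℝ) := by
    intro k hk
    have : m + 2 - (k+2) = m - k := by omega
    rw [coef, this]
    push_cast
    ring
  rw [Finset.sum_congr rfl this, ← Finset.sum_div]
  rw [show (∑ k ∈ Finset.range (m+1), (m.choose k : ℝ) * (((k+2).factorial : ℝ) * ((m-k).factorial : ℝ))) = ((m+3).factorial : ℝ) / 3 by linarith]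
  field_simp

lemma sum_powerset_card_fun {α : Type*} [DecidableEq α] (M : Finset α) (f : ℕ → ℝ) :
    ∑ A ∈ M.powerset, f A.card = ∑ k ∈ Finset.range (M.card + 1), (M.card.choose k : ℝ) * f k := by
  rw [Finset.sum_powerset]
  refine Finset.sum_congr rfl fun k hk => ?_
  rw [Finset.sum_congr rfl (fun A hA => by rw [(Finset.mem_powersetCard.mp hA).2]),
    Finset.sum_const, Finset.card_powersetCard, nsmul_eq_mul]

lemma shapley_key (n : ℕ) (ρ : ℝ) (w : Fin n → ℝ)
    (ν : Finset (Option (Fin n)) → ℝ)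
    (hν : ∀ S, ν S = if none ∈ S then
      ρ * (∑ i ∈ Finset.univ.filter (fun i : Fin n => some i ∈ S), w i) ^ 2 else 0)
    (i : Fin n) :
    shapley Finset.univ ν (some i) =
      ρ * ((w i) ^ 2 / 2 + (2 / 3) * ∑ j ∈ Finset.univ.erase i, w i * w j) := by
  classical
  obtain ⟨m, rfl⟩ : ∃ m, n = m + 1 := ⟨n - 1, by have := i.pos; omega⟩
  set M : Finset (Fin (m + 1)) := Finset.univ.erase i with hM
  have hiM : i ∉ M := Finset.notMem_erase _ _
  have hMcard : M.card = m := by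
    rw [hM, Finset.card_erase_of_mem (Finset.mem_univ i), Finset.card_univ, Fintype.card_fin]
    omega
  have hucard : (Finset.univ : Finset (Option (Fin (m + 1)))).card = m + 2 := by simp
  have hterm : ∀ S : Finset (Option (Fin (m + 1))),
      ((S.card.factorial : ℝ) *
        (((Finset.univ : Finset (Option (Fin (m + 1)))).card - S.card - 1).factorial : ℝ)) /
        (((Finset.univ : Finset (Option (Fin (m + 1)))).card.factorial : ℝ)) =
        coef (m + 1) S.card := by
    intro S
    rw [hucard, show m + 2 - S.card - 1 = m + 1 - S.card from by omega, coef]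
  -- the filter equalities
  have hΦe : ∀ A : Finset (Fin (m + 1)),
      Finset.univ.filter (fun j : Fin (m + 1) => some j ∈ insert none (A.image some)) = A := by
    intro A; ext j; simp
  have hΦei : ∀ A : Finset (Fin (m + 1)),
      Finset.univ.filter
        (fun j : Fin (m + 1) => some j ∈ insert (some i) (insert none (A.image some)))
        = insert i A := by
    intro A; ext j; simp
  have hcard_e : ∀ A : Finset (Fin (m + 1)), (insert none (A.image some)).card = A.card + 1 := by
    intro A
    rw [Finset.card_insert_of_notMem (by simp),
      Finset.card_image_of_injective _ (Option.some_injective _)]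
  -- step 1 : restrict to sets containing `none`
  have step1 : shapley Finset.univ ν (some i) =
      ∑ S ∈ ((Finset.univ.erase (some i)).powerset).filter (fun S => none ∈ S),
        coef (m + 1) S.card * (ν (insert (some i) S) - ν S) := by
    unfold shapley
    rw [Finset.sum_congr rfl (fun S _ => by rw [hterm S])]
    rw [Finset.sum_filter_of_ne]
    intro S _ hne
    by_contra hnone
    apply hne
    have h1 : ν S = 0 := by rw [hν]; exact if_neg hnone
    have h2 : ν (insert (some i) S) = 0 := by
      rw [hν]; apply if_neg; simp [hnone]
    rw [h1, h2]; ring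
  -- step 2 : bijection with subsets of M
  have step2 : ∑ S ∈ ((Finset.univ.erase (some i)).powerset).filter (fun S => none ∈ S),
        coef (m + 1) S.card * (ν (insert (some i) S) - ν S) =
      ∑ A ∈ M.powerset, coef (m + 1) (A.card + 1) *
        (ρ * (w i + ∑ j ∈ A, w j) ^ 2 - ρ * (∑ j ∈ A, w j) ^ 2) := by
    refine (Finset.sum_bij'
      (fun (A : Finset (Fin (m + 1))) (_ : A ∈ M.powerset) => insert none (A.image some))
      (fun (S : Finset (Option (Fin (m + 1)))) (_ : S ∈ _) =>
        Finset.univ.filter (fun j : Fin (m + 1) => some j ∈ S)) ?_ ?_ ?_ ?_ ?_).symm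
    · -- maps into filter set
      intro A hA
      have hAM := Finset.mem_powerset.mp hA
      rw [Finset.mem_filter]
      constructor
      · rw [Finset.mem_powerset]
        intro x hx
        rw [Finset.mem_erase]
        refine ⟨?_, Finset.mem_univ x⟩
        rcases Finset.mem_insert.mp hx with h | h
        · subst h; simp
        · obtain ⟨j, hj, rfl⟩ := Finset.mem_image.mp h
          have hji : j ≠ i := (Finset.mem_erase.mp (hAM hj)).1
          simpa using hji
      · exact Finset.mem_insert_self _ _
    · -- inverse maps into M.powerset
      intro S hS
      have hsub := Finset.mem_powerset.mp (Finset.mem_filter.mp hS).1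
      rw [Finset.mem_powerset]
      intro j hj'
      rw [Finset.mem_filter] at hj'
      have := Finset.mem_erase.mp (hsub hj'.2)
      rw [hM, Finset.mem_erase]
      exact ⟨fun h => this.1 (by rw [h]), Finset.mem_univ j⟩
    · -- left inverse
      intro A hA
      exact hΦe A
    · -- right inverse
      intro S hS
      have hnone : none ∈ S := (Finset.mem_filter.mp hS).2
      ext x
      rcases x with _ | j
      · simpa using hnone
      · simp
    · -- values agree
      intro A hA
      have hAM := Finset.mem_powerset.mp hA
      have hiA : i ∉ A := fun h => hiM (hAM h)
      have h1 : ν (insert none (A.image some)) = ρ * (∑ j ∈ A, w j) ^ 2 := by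
        rw [hν, if_pos (Finset.mem_insert_self _ _), hΦe A]
      have h2 : ν (insert (some i) (insert none (A.image some))) =
          ρ * (w i + ∑ j ∈ A, w j) ^ 2 := by
        rw [hν, if_pos (by simp), hΦei A, Finset.sum_insert hiA]
      rw [h1, h2, hcard_e A]
  -- step 3 : split the marginal contribution
  have step3 : ∑ A ∈ M.powerset, coef (m + 1) (A.card + 1) *
        (ρ * (w i + ∑ j ∈ A, w j) ^ 2 - ρ * (∑ j ∈ A, w j) ^ 2) =
      ρ * w i ^ 2 * (∑ A ∈ M.powerset, coef (m + 1) (A.card + 1)) +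
        2 * ρ * w i * (∑ A ∈ M.powerset, coef (m + 1) (A.card + 1) * (∑ j ∈ A, w j)) := by
    rw [Finset.mul_sum, Finset.mul_sum, ← Finset.sum_add_distrib]
    exact Finset.sum_congr rfl fun A _ => by ring
  -- step 4 : the constant-term sum equals 1/2
  have step4 : (∑ A ∈ M.powerset, coef (m + 1) (A.card + 1)) = 1 / 2 := by
    rw [sum_powerset_card_fun M (fun k => coef (m + 1) (k + 1)), hMcard]
    exact coef_half m
  -- step 5 : the linear-term sum equals (1/3) ∑_{j ∈ M} w j
  have step5 : (∑ A ∈ M.powerset, coef (m + 1) (A.card + 1) * (∑ j ∈ A, w j)) =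
      (1 / 3) * ∑ j ∈ M, w j := by
    have e1 : ∀ A ∈ M.powerset, coef (m + 1) (A.card + 1) * (∑ j ∈ A, w j) =
        ∑ j ∈ M, if j ∈ A then coef (m + 1) (A.card + 1) * w j else 0 := by
      intro A hA
      rw [Finset.sum_ite_mem, Finset.inter_eq_right.mpr (Finset.mem_powerset.mp hA),
        Finset.mul_sum]
    rw [Finset.sum_congr rfl e1, Finset.sum_comm, Finset.mul_sum]
    refine Finset.sum_congr rfl fun j hj => ?_
    have hbij : ∑ A ∈ M.powerset.filter (fun A => j ∈ A), coef (m + 1) (A.card + 1) =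
        ∑ B ∈ (M.erase j).powerset, coef (m + 1) (B.card + 2) := by
      refine Finset.sum_bij' (fun A _ => A.erase j) (fun B _ => insert j B) ?_ ?_ ?_ ?_ ?_
      · intro A hA
        rw [Finset.mem_filter, Finset.mem_powerset] at hA
        exact Finset.mem_powerset.mpr (Finset.erase_subset_erase j hA.1)
      · intro B hB
        rw [Finset.mem_powerset] at hB
        rw [Finset.mem_filter, Finset.mem_powerset]
        exact ⟨Finset.insert_subset hj (hB.trans (Finset.erase_subset _ _)),
          Finset.mem_insert_self _ _⟩
      · intro A hA
        exact Finset.insert_erase (Finset.mem_filter.mp hA).2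
      · intro B hB
        exact Finset.erase_insert fun h =>
          (Finset.mem_erase.mp (Finset.mem_powerset.mp hB h)).1 rfl
      · intro A hA
        have hjA : j ∈ A := (Finset.mem_filter.mp hA).2
        show coef (m + 1) (A.card + 1) = coef (m + 1) ((A.erase j).card + 2)
        rw [show (A.erase j).card + 2 = A.card + 1 from by
          have := Finset.card_erase_add_one hjA; omega]
    rw [← Finset.sum_filter, ← Finset.sum_mul, hbij,
      sum_powerset_card_fun (M.erase j) (fun k => coef (m + 1) (k + 2))]
    have hK : (M.erase j).card + 1 = m := by
      rw [Finset.card_erase_of_mem hj, hMcard]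
      have : 0 < M.card := Finset.card_pos.mpr ⟨j, hj⟩
      omega
    generalize hKK : (M.erase j).card = K at hK ⊢
    rw [show m + 1 = K + 2 from by omega, coef_third K]
  rw [step1, step2, step3, step4, step5,
    show (∑ j ∈ M, w i * w j) = w i * ∑ j ∈ M, w j from (Finset.mul_sum M w (w i)).symm]
  ring

theorem stmt_7 (n : ℕ) (ρ : ℝ) (hρ : 0 < ρ) (w : Fin n → ℝ) (hw : ∀ i, 0 < w i)
    (ν : Finset (Option (Fin n)) → ℝ)
    (hν : ∀ S, ν S = if none ∈ S then
      ρ * (∑ i ∈ Finset.univ.filter (fun i : Fin n => some i ∈ S), w i) ^ 2 else 0)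
    (i : Fin n) :
    shapley Finset.univ ν (some i) =
      ρ * ((w i) ^ 2 / 2 + (2 / 3) * ∑ j ∈ Finset.univ.erase i, w i * w j) ∧
    shapley Finset.univ ν (some i) / ν Finset.univ =
      (w i / ∑ j, w j) ^ 2 / 2 +
        (2 / 3) * (w i / ∑ j, w j) * (1 - w i / ∑ j, w j) ∧
    shapley Finset.univ ν (some i) / ν Finset.univ =
      (2 / 3) * (w i / ∑ j, w j) - (w i / ∑ j, w j) ^ 2 / 6 := by
  have key := shapley_key n ρ w ν hν i
  have hW : 0 < ∑ j, w j := Finset.sum_pos (fun j _ => hw j) ⟨i, Finset.mem_univ i⟩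
  have hWne : (∑ j, w j) ≠ 0 := ne_of_gt hW
  have hρne : ρ ≠ 0 := ne_of_gt hρ
  have hνu : ν Finset.univ = ρ * (∑ j, w j) ^ 2 := by rw [hν]; simp
  have herase : (∑ j ∈ Finset.univ.erase i, w i * w j) = w i * ((∑ j, w j) - w i) := by
    rw [← Finset.mul_sum, Finset.sum_erase_eq_sub (Finset.mem_univ i)]
  have hratio : shapley Finset.univ ν (some i) / ν Finset.univ =
      (2 / 3) * (w i / ∑ j, w j) - (w i / ∑ j, w j) ^ 2 / 6 := by
    rw [key, hνu, herase]
    field_simp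
    ring
  refine ⟨key, ?_, hratio⟩
  rw [hratio]
  field_simp
  ring
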